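/- Let σ be a permutation of [m] and τ a permutation of [n]. Then (≺_σ ⧢ ≺_τ) ∩ WOEP_{m+n} = {≺_ρ : ρ ∈ σ ⧢ τ}, where σ ⧢ τ denotes the shifted shuffle of permutations. -/

import Mathlib

namespace IntegerRelations

/-- An integer relation of size `p` is a reflexive binary relation on `Fin p`,
encoded as a set of pairs; `IsIRel R` says that `R` is reflexive. -/
def IsIRel {p : ℕ} (R : Set (Fin p × Fin p)) : Prop :=
  ∀ i : Fin p, (i, i) ∈ R

/-- The increasing subrelation `Inc R`. -/
def inc {p : ℕ} (R : Set (Fin p × Fin p)) : Set (Fin p × Fin p) :=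
  {x ∈ R | x.1 < x.2}

/-- The decreasing subrelation `Dec R`. -/
def dec {p : ℕ} (R : Set (Fin p × Fin p)) : Set (Fin p × Fin p) :=
  {x ∈ R | x.2 < x.1}

/-- The weak order: `R ≼ S` iff `Inc R ⊇ Inc S` and `Dec R ⊆ Dec S`. -/
def WOle {p : ℕ} (R S : Set (Fin p × Fin p)) : Prop :=
  inc S ⊆ inc R ∧ dec R ⊆ dec S

/-- Standardized restriction of a relation to a subset `X` of cardinality `k`. -/
def restrict {p k : ℕ} (R : Set (Fin p × Fin p)) (X : Finset (Fin p))
    (h : X.card = k) : Set (Fin k × Fin k) :=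
  {x | ((X.orderIsoOfFin h x.1 : Fin p), (X.orderIsoOfFin h x.2 : Fin p)) ∈ R}

/-- Standardized restriction of a relation to the block of `k` consecutive
positions starting at offset `o` (`0`-indexed). -/
def restrictRange {p : ℕ} (R : Set (Fin p × Fin p)) (o k : ℕ) :
    Set (Fin k × Fin k) :=
  {x | ∃ (h₁ : o + (x.1 : ℕ) < p) (h₂ : o + (x.2 : ℕ) < p),
      ((⟨o + (x.1 : ℕ), h₁⟩ : Fin p), (⟨o + (x.2 : ℕ), h₂⟩ : Fin p)) ∈ R}

/-- The relation `R` placed on the first `m` values of `[m+n]`. -/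
def shiftL {m n : ℕ} (R : Set (Fin m × Fin m)) :
    Set (Fin (m + n) × Fin (m + n)) :=
  {x | ∃ y ∈ R, x = (Fin.castAdd n y.1, Fin.castAdd n y.2)}

/-- The relation `S` shifted to the last `n` values of `[m+n]`. -/
def shiftR {m n : ℕ} (S : Set (Fin n × Fin n)) :
    Set (Fin (m + n) × Fin (m + n)) :=
  {x | ∃ y ∈ S, x = (Fin.natAdd m y.1, Fin.natAdd m y.2)}

/-- The full block `[m] × [n̄]`. -/
def lowHigh (m n : ℕ) : Set (Fin (m + n) × Fin (m + n)) :=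
  {x | (x.1 : ℕ) < m ∧ m ≤ (x.2 : ℕ)}

/-- The full block `[n̄] × [m]`. -/
def highLow (m n : ℕ) : Set (Fin (m + n) × Fin (m + n)) :=
  {x | m ≤ (x.1 : ℕ) ∧ (x.2 : ℕ) < m}

/-- The shifted shuffle `R ⧢ S` of two integer relations. -/
def shiftedShuffle {m n : ℕ} (R : Set (Fin m × Fin m)) (S : Set (Fin n × Fin n)) :
    Set (Set (Fin (m + n) × Fin (m + n))) :=
  {T | ∃ I D : Set (Fin (m + n) × Fin (m + n)),
      I ⊆ lowHigh m n ∧ D ⊆ highLow m n ∧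
      T = shiftL R ∪ shiftR S ∪ I ∪ D}

/-- `underprod R S = R ∪ S̄ ∪ ([m] × [n̄])`. -/
def underprod {m n : ℕ} (R : Set (Fin m × Fin m)) (S : Set (Fin n × Fin n)) :
    Set (Fin (m + n) × Fin (m + n)) :=
  shiftL R ∪ shiftR S ∪ lowHigh m n

/-- `overprod R S = R ∪ S̄ ∪ ([n̄] × [m])`. -/
def overprod {m n : ℕ} (R : Set (Fin m × Fin m)) (S : Set (Fin n × Fin n)) :
    Set (Fin (m + n) × Fin (m + n)) :=
  shiftL R ∪ shiftR S ∪ highLow m n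

/-- A total cut `(X, Y)` of a relation `T`. -/
def IsTotalCut {p : ℕ} (T : Set (Fin p × Fin p)) (X Y : Finset (Fin p)) : Prop :=
  (∀ i : Fin p, i ∈ X ∨ i ∈ Y) ∧ Disjoint X Y ∧
    ∀ x ∈ X, ∀ y ∈ Y, (x, y) ∈ T ∧ (y, x) ∉ T

/-- The convolution `R ∗ S` of two integer relations. -/
def convolution {m n : ℕ} (R : Set (Fin m × Fin m)) (S : Set (Fin n × Fin n)) :
    Set (Set (Fin (m + n) × Fin (m + n))) :=
  {T | ∃ (X Y : Finset (Fin (m + n))) (hX : X.card = m) (hY : Y.card = n),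
      IsTotalCut T X Y ∧ restrict T X hX = R ∧ restrict T Y hY = S}

/-- An integer poset: a reflexive, antisymmetric and transitive integer relation. -/
def IsIPos {p : ℕ} (T : Set (Fin p × Fin p)) : Prop :=
  IsIRel T ∧ (∀ a b : Fin p, (a, b) ∈ T → (b, a) ∈ T → a = b) ∧
    ∀ a b c : Fin p, (a, b) ∈ T → (b, c) ∈ T → (a, c) ∈ T

/-- A total order: an integer poset in which any two elements are comparable
(these are exactly the weak order element posets, `WOEP`). -/
def IsITotal {p : ℕ} (T : Set (Fin p × Fin p)) : Prop :=
  IsIPos T ∧ ∀ a b : Fin p, (a, b) ∈ T ∨ (b, a) ∈ T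

/-- `T` admits a primitive cut at `k` (here positions are `0`-indexed, so the
`1`-indexed condition `i ≤ k < j` reads `i < k ≤ j`). -/
def HasPrimitiveCutAt {p : ℕ} (T : Set (Fin p × Fin p)) (k : ℕ) : Prop :=
  ∀ i j : Fin p, (i : ℕ) < k → k ≤ (j : ℕ) → (i, j) ∈ T ∧ (j, i) ∉ T

/-- `T` is under-indecomposable: no non-trivial primitive cut. -/
def UnderIndecomposable {p : ℕ} (T : Set (Fin p × Fin p)) : Prop :=
  ∀ k : ℕ, 0 < k → k < p → ¬ HasPrimitiveCutAt T k

/-- Membership in `IWOIP`. -/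
def InIWOIP {p : ℕ} (T : Set (Fin p × Fin p)) : Prop :=
  IsIPos T ∧ ∀ a b c : Fin p, a < b → b < c → (a, c) ∈ T → (a, b) ∈ T ∨ (b, c) ∈ T

/-- Membership in `DWOIP`. -/
def InDWOIP {p : ℕ} (T : Set (Fin p × Fin p)) : Prop :=
  IsIPos T ∧ ∀ a b c : Fin p, a < b → b < c → (c, a) ∈ T → (b, a) ∈ T ∨ (c, b) ∈ T

/-- Membership in `WOIP = IWOIP ∩ DWOIP`. -/
def InWOIP {p : ℕ} (T : Set (Fin p × Fin p)) : Prop := InIWOIP T ∧ InDWOIP T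

/-- Membership in `WOFP`. -/
def InWOFP {p : ℕ} (T : Set (Fin p × Fin p)) : Prop :=
  InWOIP T ∧ ∀ a b c : Fin p, a < b → b < c → (a, c) ∉ T → (c, a) ∉ T →
    (((a, b) ∈ T ↔ (c, b) ∈ T) ∧ ((b, a) ∈ T ↔ (b, c) ∈ T))

/-- The `IWOIP` increasing deletion. -/
def IWOIPid {p : ℕ} (T : Set (Fin p × Fin p)) : Set (Fin p × Fin p) :=
  T \ {x | x.1 < x.2 ∧ ∃ l : List (Fin p), l ≠ [] ∧
      List.Chain (fun a b : Fin p => a < b ∧ (a, b) ∉ T) x.1 (l ++ [x.2])}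

/-- The `DWOIP` decreasing deletion. -/
def DWOIPdd {p : ℕ} (T : Set (Fin p × Fin p)) : Set (Fin p × Fin p) :=
  T \ {x | x.2 < x.1 ∧ ∃ l : List (Fin p), l ≠ [] ∧
      List.Chain (fun a b : Fin p => a < b ∧ (b, a) ∉ T) x.2 (l ++ [x.1])}

/-- The `WOIP` deletion. -/
def WOIPd {p : ℕ} (T : Set (Fin p × Fin p)) : Set (Fin p × Fin p) :=
  IWOIPid (DWOIPdd T)

/-- The chain poset `≺_σ` of a permutation: `u ≺_σ v` iff `σ⁻¹ u ≤ σ⁻¹ v`. -/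
def chainPoset {p : ℕ} (σ : Equiv.Perm (Fin p)) : Set (Fin p × Fin p) :=
  {x | σ.symm x.1 ≤ σ.symm x.2}

/-- The shifted shuffle of two permutations. -/
def permShiftedShuffle {m n : ℕ} (σ : Equiv.Perm (Fin m)) (τ : Equiv.Perm (Fin n)) :
    Set (Equiv.Perm (Fin (m + n))) :=
  {ρ | (∀ u v : Fin m,
        ρ.symm (Fin.castAdd n u) < ρ.symm (Fin.castAdd n v) ↔ σ.symm u < σ.symm v) ∧
      ∀ u v : Fin n,
        ρ.symm (Fin.natAdd m u) < ρ.symm (Fin.natAdd m v) ↔ τ.symm u < τ.symm v}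

/-- The convolution of two permutations. -/
def permConvolution {m n : ℕ} (σ : Equiv.Perm (Fin m)) (τ : Equiv.Perm (Fin n)) :
    Set (Equiv.Perm (Fin (m + n))) :=
  {ρ | (∀ i j : Fin m, ρ (Fin.castAdd n i) < ρ (Fin.castAdd n j) ↔ σ i < σ j) ∧
      ∀ i j : Fin n, ρ (Fin.natAdd m i) < ρ (Fin.natAdd m j) ↔ τ i < τ j}

/-- Relabelling of a relation along a bijection. -/
def relabel {p q : ℕ} (e : Fin p ≃ Fin q) (T : Set (Fin p × Fin p)) :
    Set (Fin q × Fin q) :=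
  {x | (e.symm x.1, e.symm x.2) ∈ T}

/-- The diagonal `Δ_p`. -/
def diagonal (p : ℕ) : Set (Fin p × Fin p) := {x | x.1 = x.2}

theorem exists_perm_of_total {p : ℕ} (T : Set (Fin p × Fin p)) (h : IsITotal T) :
    ∃ ρ : Equiv.Perm (Fin p), ∀ x y : Fin p, (x, y) ∈ T ↔ ρ.symm x ≤ ρ.symm y := by
  classical
  obtain ⟨⟨hrefl, hanti, htrans⟩, htot⟩ := h
  set r : Fin p → Fin p → Prop := fun a b => (a, b) ∈ T with hr
  haveI : IsTrans (Fin p) r := ⟨fun a b c => htrans a b c⟩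
  haveI : Std.Antisymm r := ⟨fun a b => hanti a b⟩
  haveI : Std.Total r := ⟨fun a b => htot a b⟩
  haveI : DecidableRel r := Classical.decRel r
  set l := Finset.sort Finset.univ r with hl
  have hlen : l.length = p := by simp [hl]
  have hnd : l.Nodup := Finset.sort_nodup _ r
  have hsort : l.Pairwise r := Finset.pairwise_sort _ r
  set f : Fin p → Fin p := fun i => l.get (Fin.cast hlen.symm i) with hf
  have hinj : Function.Injective f := by
    intro i j hij
    have := (List.Nodup.get_inj_iff hnd).mp hij
    exact Fin.ext (by simpa using congrArg Fin.val this)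
  have hbij := Finite.injective_iff_bijective.mp hinj
  set e := Equiv.ofBijective f hbij with he
  have key : ∀ i j : Fin p, r (f i) (f j) ↔ i ≤ j := by
    intro i j
    constructor
    · intro hrij
      by_contra hle
      push_neg at hle
      have hji : r (f j) (f i) := hsort.rel_get_of_lt hle
      have : f i = f j := antisymm hrij hji
      have := hinj this
      omega
    · intro hij
      rcases eq_or_lt_of_le hij with rfl | hlt
      · exact hrefl _
      · exact hsort.rel_get_of_lt hlt
  refine ⟨e, fun x y => ?_⟩
  have hx : f (e.symm x) = x := e.apply_symm_apply x
  have hy : f (e.symm y) = y := e.apply_symm_apply y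
  have := key (e.symm x) (e.symm y)
  rw [hx, hy] at this
  exact this

private theorem le_of_lt_iff {m p : ℕ} (ρ : Equiv.Perm (Fin p)) (σ : Equiv.Perm (Fin m))
    (g : Fin m → Fin p)
    (h : ∀ u v : Fin m, ρ.symm (g u) < ρ.symm (g v) ↔ σ.symm u < σ.symm v)
    (u v : Fin m) : ρ.symm (g u) ≤ ρ.symm (g v) ↔ σ.symm u ≤ σ.symm v := by
  rw [← not_lt, ← not_lt, h v u]

theorem chainPoset_shiftedShuffle (m n : ℕ)
    (σ : Equiv.Perm (Fin m)) (τ : Equiv.Perm (Fin n)) :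
    {T | T ∈ shiftedShuffle (chainPoset σ) (chainPoset τ) ∧ IsITotal T}
      = {T : Set (Fin (m + n) × Fin (m + n)) |
          ∃ ρ : Equiv.Perm (Fin (m + n)),
            ρ ∈ permShiftedShuffle σ τ ∧ T = chainPoset ρ} := by
  ext T
  simp only [Set.mem_setOf_eq]
  constructor
  · rintro ⟨⟨I, D, hI, hD, hT⟩, htot⟩
    obtain ⟨ρ, key⟩ := exists_perm_of_total T htot
    have hLm : ∀ u v : Fin m,
        ((Fin.castAdd n u, Fin.castAdd n v) ∈ T ↔ σ.symm u ≤ σ.symm v) := by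
      intro u v
      constructor
      · intro h
        rw [hT] at h
        rcases h with ((h | h) | h) | h
        · obtain ⟨y, hy, hxy⟩ := h
          have e1 : (u : ℕ) = (y.1 : ℕ) := by
            simpa using congrArg Fin.val (congrArg Prod.fst hxy)
          have e2 : (v : ℕ) = (y.2 : ℕ) := by
            simpa using congrArg Fin.val (congrArg Prod.snd hxy)
          have hu : u = y.1 := Fin.ext e1
          have hv : v = y.2 := Fin.ext e2
          rw [hu, hv]; exact hy
        · obtain ⟨y, hy, hxy⟩ := h
          have e1 : (u : ℕ) = m + (y.1 : ℕ) := by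
            simpa using congrArg Fin.val (congrArg Prod.fst hxy)
          have := u.isLt; omega
        · have hx := (hI h).2
          simp only [Fin.coe_castAdd] at hx
          have hv := v.isLt; omega
        · have hx := (hD h).1
          simp only [Fin.coe_castAdd] at hx
          have hu := u.isLt; omega
      · intro h
        rw [hT]
        exact Or.inl (Or.inl (Or.inl ⟨(u, v), h, rfl⟩))
    have hRn : ∀ u v : Fin n,
        ((Fin.natAdd m u, Fin.natAdd m v) ∈ T ↔ τ.symm u ≤ τ.symm v) := by
      intro u v
      constructor
      · intro h
        rw [hT] at h
        rcases h with ((h | h) | h) | h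
        · obtain ⟨y, hy, hxy⟩ := h
          have e1 : m + (u : ℕ) = (y.1 : ℕ) := by
            simpa using congrArg Fin.val (congrArg Prod.fst hxy)
          have := y.1.isLt; omega
        · obtain ⟨y, hy, hxy⟩ := h
          have e1 : m + (u : ℕ) = m + (y.1 : ℕ) := by
            simpa using congrArg Fin.val (congrArg Prod.fst hxy)
          have e2 : m + (v : ℕ) = m + (y.2 : ℕ) := by
            simpa using congrArg Fin.val (congrArg Prod.snd hxy)
          have hu : u = y.1 := Fin.ext (by omega)
          have hv : v = y.2 := Fin.ext (by omega)
          rw [hu, hv]; exact hy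
        · have hx := (hI h).1
          simp only [Fin.coe_natAdd] at hx
          omega
        · have hx := (hD h).2
          simp only [Fin.coe_natAdd] at hx
          omega
      · intro h
        rw [hT]
        exact Or.inl (Or.inl (Or.inr ⟨(u, v), h, rfl⟩))
    have hle1 : ∀ u v : Fin m,
        ρ.symm (Fin.castAdd n u) ≤ ρ.symm (Fin.castAdd n v) ↔ σ.symm u ≤ σ.symm v :=
      fun u v => (key _ _).symm.trans (hLm u v)
    have hle2 : ∀ u v : Fin n,
        ρ.symm (Fin.natAdd m u) ≤ ρ.symm (Fin.natAdd m v) ↔ τ.symm u ≤ τ.symm v :=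
      fun u v => (key _ _).symm.trans (hRn u v)
    refine ⟨ρ, ⟨fun u v => ?_, fun u v => ?_⟩, ?_⟩
    · rw [lt_iff_not_ge, lt_iff_not_ge, hle1 v u]
    · rw [lt_iff_not_ge, lt_iff_not_ge, hle2 v u]
    · exact Set.ext fun x => key x.1 x.2
  · rintro ⟨ρ, ⟨h1, h2⟩, rfl⟩
    have hle1 := le_of_lt_iff ρ σ (Fin.castAdd n) h1
    have hle2 := le_of_lt_iff ρ τ (Fin.natAdd m) h2
    constructor
    · refine ⟨chainPoset ρ ∩ lowHigh m n, chainPoset ρ ∩ highLow m n,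
        Set.inter_subset_right, Set.inter_subset_right, ?_⟩
      apply Set.Subset.antisymm
      · rintro ⟨a, b⟩ hab
        have hab' : ρ.symm a ≤ ρ.symm b := hab
        rcases lt_or_ge (a : ℕ) m with ha | ha <;> rcases lt_or_ge (b : ℕ) m with hb | hb
        · obtain ⟨u, hu⟩ : ∃ u : Fin m, Fin.castAdd n u = a := ⟨⟨(a : ℕ), ha⟩, Fin.ext rfl⟩
          obtain ⟨v, hv⟩ : ∃ v : Fin m, Fin.castAdd n v = b := ⟨⟨(b : ℕ), hb⟩, Fin.ext rfl⟩
          refine Or.inl (Or.inl (Or.inl ⟨(u, v), ?_, by rw [← hu, ← hv]⟩))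
          refine (hle1 u v).mp ?_
          rw [hu, hv]; exact hab'
        · exact Or.inl (Or.inr ⟨hab, ha, hb⟩)
        · exact Or.inr ⟨hab, ha, hb⟩
        · obtain ⟨u, hu⟩ : ∃ u : Fin n, Fin.natAdd m u = a :=
            ⟨⟨(a : ℕ) - m, by omega⟩, Fin.ext (by simp; omega)⟩
          obtain ⟨v, hv⟩ : ∃ v : Fin n, Fin.natAdd m v = b :=
            ⟨⟨(b : ℕ) - m, by omega⟩, Fin.ext (by simp; omega)⟩
          refine Or.inl (Or.inl (Or.inr ⟨(u, v), ?_, by rw [← hu, ← hv]⟩))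
          refine (hle2 u v).mp ?_
          rw [hu, hv]; exact hab'
      · refine Set.union_subset (Set.union_subset (Set.union_subset ?_ ?_)
          Set.inter_subset_left) Set.inter_subset_left
        · rintro x ⟨y, hy, rfl⟩
          exact (hle1 _ _).mpr hy
        · rintro x ⟨y, hy, rfl⟩
          exact (hle2 _ _).mpr hy
    · constructor
      · refine ⟨fun i => ?_, fun a b hab hba => ?_, fun a b c hab hbc => ?_⟩
        · show ρ.symm i ≤ ρ.symm i
          exact le_refl _
        · exact ρ.symm.injective
            (le_antisymm (hab : ρ.symm a ≤ ρ.symm b) (hba : ρ.symm b ≤ ρ.symm a))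
        · show ρ.symm a ≤ ρ.symm c
          exact le_trans (hab : ρ.symm a ≤ ρ.symm b) (hbc : ρ.symm b ≤ ρ.symm c)
      · exact fun a b => le_total (ρ.symm a) (ρ.symm b)

end IntegerRelations
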